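/- arXiv:math/0407440 — 2 statements merged into one kernel-verified Lean document; each statement's English description precedes it below -/
import Mathlib

section
/- Suppose H is an ideal on P_κ(λ) with a_H = κ. Then there is an ideal K on P_κ(λ) such that K is not a weak π-point, cof(K) ≤ cof(H), and cof̄(K) ≤ cof̄(H). -/
open Cardinal Set

namespace PaperFormal

noncomputable section

/-- The least (small) cardinality of a family `F : Set X` satisfying `P`. -/
def leastCard {X : Type 1} (P : Set X → Prop) : Cardinal.{0} :=
  sInf {c : Cardinal.{0} | ∃ F : Set X, P F ∧ Cardinal.lift.{1} c = #F}

/-- The collection of (codings of) functions from `κ` to `κ`. -/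
def funOn (κ : Cardinal.{0}) : Set (Ordinal.{0} → Ordinal.{0}) :=
  {f | ∀ α < κ.ord, f α < κ.ord}

/-- The unequality number `U_κ`. -/
def uneq (κ : Cardinal.{0}) : Cardinal.{0} :=
  leastCard fun F : Set (Ordinal.{0} → Ordinal.{0}) => F ⊆ funOn κ ∧
    ∀ g ∈ funOn κ, ∃ f ∈ F, {α | α < κ.ord ∧ f α = g α} = ∅

/-- The dominating number `d_κ`. -/
def domNum (κ : Cardinal.{0}) : Cardinal.{0} :=
  leastCard fun F : Set (Ordinal.{0} → Ordinal.{0}) => F ⊆ funOn κ ∧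
    ∀ g ∈ funOn κ, ∃ f ∈ F, ∀ α < κ.ord, g α < f α

/-- The number `d̄_κ`. -/
def domBar (κ : Cardinal.{0}) : Cardinal.{0} :=
  leastCard fun X : Set (Ordinal.{0} → Ordinal.{0}) => X ⊆ funOn κ ∧
    ∀ g ∈ funOn κ, ∃ x ⊆ X, x.Nonempty ∧ #x < Cardinal.lift.{1} κ ∧
      ∀ α < κ.ord, g α < sSup {o | ∃ f ∈ x, f α = o}

/-- The generalized Cantor space `^ρ2`, with points coded as subsets of `Iio ρ.ord`. -/
def cantor (ρ : Cardinal.{0}) : Set (Set Ordinal.{0}) := {x | x ⊆ Iio ρ.ord}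

/-- A forcing condition: a pair `(a, t)` with `t ⊆ a ⊆ Iio ρ.ord` and `|a| < ν`. -/
def IsCond (ν ρ : Cardinal.{0}) (a t : Set Ordinal.{0}) : Prop :=
  a ⊆ Iio ρ.ord ∧ t ⊆ a ∧ #a < Cardinal.lift.{1} ν

/-- The basic open set determined by a condition. -/
def basicOpen (ρ : Cardinal.{0}) (a t : Set Ordinal.{0}) : Set (Set Ordinal.{0}) :=
  {x | x ⊆ Iio ρ.ord ∧ x ∩ a = t}

/-- Dense open subsets of `^ρ2` (for the `<ν`-support topology). -/
def DenseOpen (ν ρ : Cardinal.{0}) (D : Set (Set Ordinal.{0})) : Prop :=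
  D ⊆ cantor ρ ∧
  (∀ x ∈ D, ∃ a t, IsCond ν ρ a t ∧ x ∈ basicOpen ρ a t ∧ basicOpen ρ a t ⊆ D) ∧
  (∀ a t, IsCond ν ρ a t → (basicOpen ρ a t ∩ D).Nonempty)

/-- Members of `M_{ν,ρ}`. -/
def Meager (ν ρ : Cardinal.{0}) (W : Set (Set Ordinal.{0})) : Prop :=
  W ⊆ cantor ρ ∧ ∃ X : Set (Set (Set Ordinal.{0})), X.Nonempty ∧
    #X ≤ Cardinal.lift.{1} ν ∧ (∀ D ∈ X, DenseOpen ν ρ D) ∧ W ∩ ⋂₀ X = ∅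

/-- The covering number for category `cov(M_{ν,ρ})`. -/
def covM (ν ρ : Cardinal.{0}) : Cardinal.{0} :=
  leastCard fun Y : Set (Set (Set Ordinal.{0})) =>
    (∀ W ∈ Y, Meager ν ρ W) ∧ ⋃₀ Y = cantor ρ

/-- A (`κ`-complete) ideal on `κ`. -/
structure IdealK (κ : Cardinal.{0}) where
  mem : Set (Set Ordinal.{0})
  subset_iio : ∀ A ∈ mem, A ⊆ Iio κ.ord
  singleton_mem : ∀ α < κ.ord, {α} ∈ mem
  subset_mem : ∀ A ∈ mem, ∀ B ⊆ A, B ∈ mem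
  sUnion_mem : ∀ X : Set (Set Ordinal.{0}), X ⊆ mem → #X < Cardinal.lift.{1} κ → ⋃₀ X ∈ mem
  ne_top : Iio κ.ord ∉ mem

/-- `J⁺`, the sets (⊆ κ) not in the ideal. -/
def IdealK.plus {κ : Cardinal.{0}} (J : IdealK κ) : Set (Set Ordinal.{0}) :=
  {A | A ⊆ Iio κ.ord ∧ A ∉ J.mem}

/-- `cof(J)`. -/
def IdealK.cof {κ : Cardinal.{0}} (J : IdealK κ) : Cardinal.{0} :=
  leastCard fun X : Set (Set Ordinal.{0}) =>
    X ⊆ J.mem ∧ ∀ A, A ∈ J.mem ↔ ∃ B ∈ X, A ⊆ B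

/-- `cof̄(J)`. -/
def IdealK.cofBar {κ : Cardinal.{0}} (J : IdealK κ) : Cardinal.{0} :=
  leastCard fun X : Set (Set Ordinal.{0}) =>
    X ⊆ J.mem ∧ ∀ A ∈ J.mem, ∃ x ⊆ X, #x < Cardinal.lift.{1} κ ∧ A ⊆ ⋃₀ x

/-- `non_κ(P)`. -/
def nonK (κ : Cardinal.{0}) (P : IdealK κ → Prop) : Cardinal.{0} :=
  sInf {c | ∃ J : IdealK κ, J.cof = c ∧ ¬ P J}

/-- `non̄_κ(P)`. -/
def nonBarK (κ : Cardinal.{0}) (P : IdealK κ → Prop) : Cardinal.{0} :=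
  sInf {c | ∃ J : IdealK κ, J.cofBar = c ∧ ¬ P J}

/-- Weak `P`-point. -/
def WeakPPoint {κ : Cardinal.{0}} (J : IdealK κ) : Prop :=
  ∀ A ∈ J.plus, ∀ f : Ordinal.{0} → Ordinal.{0},
    (∀ α ∈ A, f α < κ.ord) → (∀ β, {α ∈ A | f α = β} ∈ J.mem) →
    ∃ B ∈ J.plus, B ⊆ A ∧ ∀ β, #{α ∈ B | f α = β} < Cardinal.lift.{1} κ

/-- Weak `Q`-point. -/
def WeakQPoint {κ : Cardinal.{0}} (J : IdealK κ) : Prop :=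
  ∀ A ∈ J.plus, ∀ g ∈ funOn κ,
    ∃ B ∈ J.plus, B ⊆ A ∧ ∀ α ∈ B, ∀ β ∈ B, α < β → g α < β

/-- Weakly selective ideal. -/
def WeaklySelective {κ : Cardinal.{0}} (J : IdealK κ) : Prop :=
  WeakPPoint J ∧ WeakQPoint J

/-- Weak semi-`Q`-point. -/
def WeakSemiQPoint {κ : Cardinal.{0}} (J : IdealK κ) : Prop :=
  ∀ A ∈ J.plus, ∀ f : Ordinal.{0} → Ordinal.{0},
    (∀ α ∈ A, f α < κ.ord) →
    (∀ β, #{α ∈ A | f α = β} < Cardinal.lift.{1} κ) →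
    ∃ C ∈ J.plus, C ⊆ A ∧ ∀ β < κ.ord, #{α ∈ C | f α = β} ≤ Cardinal.lift.{1} β.card

/-- `P_κ(λ)`, coded as the small subsets of `Iio λ.ord`. -/
def smallSet (κ lam : Cardinal.{0}) : Set (Set Ordinal.{0}) :=
  {a | a ⊆ Iio lam.ord ∧ #a < Cardinal.lift.{1} κ}

/-- The ideal `I_{κ,λ}` of noncofinal subsets of `P_κ(λ)`. -/
def Ikl (κ lam : Cardinal.{0}) : Set (Set (Set Ordinal.{0})) :=
  {A | A ⊆ smallSet κ lam ∧ ∃ a ∈ smallSet κ lam, ∀ b ∈ A, ¬ a ⊆ b}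

/-- A (`κ`-complete fine) ideal on `P_κ(λ)`. -/
structure IdealP (κ lam : Cardinal.{0}) where
  mem : Set (Set (Set Ordinal.{0}))
  subset_pk : ∀ A ∈ mem, A ⊆ smallSet κ lam
  fine : Ikl κ lam ⊆ mem
  subset_mem : ∀ A ∈ mem, ∀ B ⊆ A, B ∈ mem
  sUnion_mem : ∀ X : Set (Set (Set Ordinal.{0})), X ⊆ mem →
    #X < Cardinal.lift.{1} κ → ⋃₀ X ∈ mem
  ne_top : smallSet κ lam ∉ mem

/-- `H⁺` computed from the underlying collection `Hm` of an ideal on `P_κ(λ)`. -/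
def plusOf (κ lam : Cardinal.{0}) (Hm : Set (Set (Set Ordinal.{0}))) :
    Set (Set (Set Ordinal.{0})) :=
  {A | A ⊆ smallSet κ lam ∧ A ∉ Hm}

/-- `H⁺`. -/
def IdealP.plus {κ lam : Cardinal.{0}} (H : IdealP κ lam) : Set (Set (Set Ordinal.{0})) :=
  plusOf κ lam H.mem

/-- `cof(H)`. -/
def IdealP.cof {κ lam : Cardinal.{0}} (H : IdealP κ lam) : Cardinal.{0} :=
  leastCard fun X : Set (Set (Set Ordinal.{0})) =>
    X ⊆ H.mem ∧ ∀ A, A ∈ H.mem ↔ ∃ B ∈ X, A ⊆ B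

/-- `cof̄(H)`. -/
def IdealP.cofBar {κ lam : Cardinal.{0}} (H : IdealP κ lam) : Cardinal.{0} :=
  leastCard fun X : Set (Set (Set Ordinal.{0})) =>
    X ⊆ H.mem ∧ ∀ A ∈ H.mem, ∃ x ⊆ X, #x < Cardinal.lift.{1} κ ∧ A ⊆ ⋃₀ x

/-- `d^κ_{κ,λ}`. -/
def domP (κ lam : Cardinal.{0}) : Cardinal.{0} :=
  leastCard fun F : Set (Ordinal.{0} → Set Ordinal.{0}) =>
    (∀ f ∈ F, ∀ α < κ.ord, f α ∈ smallSet κ lam) ∧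
    ∀ g : Ordinal.{0} → Set Ordinal.{0}, (∀ α < κ.ord, g α ∈ smallSet κ lam) →
      ∃ f ∈ F, ∀ α < κ.ord, g α ⊆ f α

/-- A maximal almost disjoint family of size `≥ κ` for `H` (a member of `M_H^{≥κ}`). -/
def IsMad {κ lam : Cardinal.{0}} (H : IdealP κ lam) (Q : Set (Set (Set Ordinal.{0}))) : Prop :=
  Q ⊆ H.plus ∧ Cardinal.lift.{1} κ ≤ #Q ∧
  (∀ A ∈ Q, ∀ B ∈ Q, A ≠ B → A ∩ B ∈ H.mem) ∧
  ∀ C ∈ H.plus, ∃ A ∈ Q, A ∩ C ∈ H.plus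

/-- The (small) cardinal `c` with `lift c = c'`, used to pull `λ^{<κ} = |P_κ(λ)|` down. -/
def downCard (c : Cardinal.{1}) : Cardinal.{0} :=
  sInf {d : Cardinal.{0} | Cardinal.lift.{1} d = c}

open Classical in
/-- The number `a_H`. -/
def aNum {κ lam : Cardinal.{0}} (H : IdealP κ lam) : Cardinal.{0} :=
  if ∃ Q, IsMad H Q then sInf {c | ∃ Q, IsMad H Q ∧ Cardinal.lift.{1} c = #Q}
  else 2 ^ Order.succ (downCard #(smallSet κ lam))

/-- Weak `π`-point. -/
def WeakPiPoint {κ lam : Cardinal.{0}} (H : IdealP κ lam) : Prop :=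
  ∀ f : Ordinal.{0} → Set (Set Ordinal.{0}), (∀ α < κ.ord, f α ∈ H.mem) →
    ∀ A ∈ H.plus, ∃ B ∈ H.plus, B ⊆ A ∧ ∀ α < κ.ord, B ∩ f α ∈ Ikl κ lam

/-- `∪(a ∩ κ)`. -/
def supK (κ : Cardinal.{0}) (a : Set Ordinal.{0}) : Ordinal.{0} :=
  sSup (a ∩ Iio κ.ord)

/-- The relation `a ≺ b`. -/
def prec (κ : Cardinal.{0}) (a b : Set Ordinal.{0}) : Prop :=
  a ⊆ b ∧ supK κ a < supK κ b

/-- `[A]_κ²`. -/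
def pairsK (κ : Cardinal.{0}) (A : Set (Set Ordinal.{0})) : Set (Ordinal.{0} × Set Ordinal.{0}) :=
  {p | ∃ a ∈ A, ∃ b ∈ A, supK κ a < supK κ b ∧ p = (supK κ a, b)}

/-- `[A]_≺²`. -/
def pairsPrec (κ : Cardinal.{0}) (A : Set (Set Ordinal.{0})) :
    Set (Ordinal.{0} × Set Ordinal.{0}) :=
  {p | ∃ a ∈ A, ∃ b ∈ A, prec κ a b ∧ p = (supK κ a, b)}

/-- `[A]_{κ,κ}²`. -/
def pairsKK (κ : Cardinal.{0}) (A : Set (Set Ordinal.{0})) : Set (Ordinal.{0} × Ordinal.{0}) :=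
  {p | ∃ a ∈ A, ∃ b ∈ A, supK κ a < supK κ b ∧ p = (supK κ a, supK κ b)}

/-- `S` is a set of ordinals of order type `α`. -/
def OrdType (S : Set Ordinal.{0}) (α : Ordinal.{0}) : Prop :=
  ∃ e : Ordinal.{0} → Ordinal.{0},
    (∀ i < α, ∀ j < α, i < j → e i < e j) ∧ e '' Iio α = S

/-- `(B, ≺)` has order type `α`. -/
def OrdTypePrec (κ : Cardinal.{0}) (B : Set (Set Ordinal.{0})) (α : Ordinal.{0}) : Prop :=
  ∃ e : Ordinal.{0} → Set Ordinal.{0},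
    (∀ i < α, ∀ j < α, i < j → prec κ (e i) (e j)) ∧ e '' Iio α = B

/-- The partition relation `κ → (κ, θ)²`. -/
def ArrowKTheta (κ : Cardinal.{0}) (θ : Ordinal.{0}) : Prop :=
  ∀ f : Ordinal.{0} → Ordinal.{0} → Fin 2, ∃ A ⊆ Iio κ.ord,
    (OrdType A κ.ord ∧ ∀ α ∈ A, ∀ β ∈ A, α < β → f α β = 0) ∨
    (OrdType A θ ∧ ∀ α ∈ A, ∀ β ∈ A, α < β → f α β = 1)

/-- `κ` is weakly compact. -/
def WeaklyCompact (κ : Cardinal.{0}) : Prop :=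
  ∀ f : Ordinal.{0} → Ordinal.{0} → Fin 2, ∃ A ⊆ Iio κ.ord,
    OrdType A κ.ord ∧ ∃ i, ∀ α ∈ A, ∀ β ∈ A, α < β → f α β = i

/-- The partition relation `J⁺ → (J⁺, α)²` for an ideal on `κ`. -/
def ArrowJ {κ : Cardinal.{0}} (J : IdealK κ) (α : Ordinal.{0}) : Prop :=
  ∀ A ∈ J.plus, ∀ f : Ordinal.{0} → Ordinal.{0} → Fin 2,
    ∃ B ⊆ A, (B ∈ J.plus ∧ ∀ β ∈ B, ∀ γ ∈ B, β < γ → f β γ = 0) ∨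
             (OrdType B α ∧ ∀ β ∈ B, ∀ γ ∈ B, β < γ → f β γ = 1)

/-- The square bracket relation `J⁺ → [J⁺]_ρ²` for an ideal on `κ`. -/
def SqBrJ {κ : Cardinal.{0}} (J : IdealK κ) (ρ : Cardinal.{0}) : Prop :=
  ∀ A ∈ J.plus, ∀ f : Ordinal.{0} → Ordinal.{0} → Ordinal.{0},
    (∀ β ∈ A, ∀ γ ∈ A, β < γ → f β γ < ρ.ord) →
    ∃ B ∈ J.plus, B ⊆ A ∧ {ξ | ∃ β ∈ B, ∃ γ ∈ B, β < γ ∧ f β γ = ξ} ≠ Iio ρ.ord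

/-- `H⁺ →_κ (H⁺, α)²`. -/
def ArrowP (κ lam : Cardinal.{0}) (Hm : Set (Set (Set Ordinal.{0}))) (α : Ordinal.{0}) : Prop :=
  ∀ F : Ordinal.{0} → Set Ordinal.{0} → Fin 2, ∀ A ∈ plusOf κ lam Hm,
    ∃ B ⊆ A, (B ∈ plusOf κ lam Hm ∧ ∀ p ∈ pairsK κ B, F p.1 p.2 = 0) ∨
             (OrdTypePrec κ B α ∧ ∀ p ∈ pairsK κ B, F p.1 p.2 = 1)

/-- `H⁺ →_{κ,κ} (H⁺, α)²`. -/
def ArrowPKK (κ lam : Cardinal.{0}) (Hm : Set (Set (Set Ordinal.{0}))) (α : Ordinal.{0}) : Prop :=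
  ∀ F : Ordinal.{0} → Ordinal.{0} → Fin 2, ∀ A ∈ plusOf κ lam Hm,
    ∃ B ⊆ A, (B ∈ plusOf κ lam Hm ∧ ∀ p ∈ pairsKK κ B, F p.1 p.2 = 0) ∨
             (OrdTypePrec κ B α ∧ ∀ p ∈ pairsKK κ B, F p.1 p.2 = 1)

/-- `H⁺ →_{κ,κ} (H⁺; α)²`. -/
def ArrowPKKsemi (κ lam : Cardinal.{0}) (Hm : Set (Set (Set Ordinal.{0}))) (α : Ordinal.{0}) :
    Prop :=
  ∀ F : Ordinal.{0} → Ordinal.{0} → Fin 2, ∀ A ∈ plusOf κ lam Hm,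
    ∃ B ⊆ A, (B ∈ plusOf κ lam Hm ∧ ∀ p ∈ pairsKK κ B, F p.1 p.2 = 0) ∨
             (OrdType {o | ∃ a ∈ B, supK κ a = o} α ∧ ∀ p ∈ pairsKK κ B, F p.1 p.2 = 1)

/-- `H⁺ →_κ (H⁺)²`. -/
def ArrowPConst (κ lam : Cardinal.{0}) (Hm : Set (Set (Set Ordinal.{0}))) : Prop :=
  ∀ F : Ordinal.{0} → Set Ordinal.{0} → Fin 2, ∀ A ∈ plusOf κ lam Hm,
    ∃ B ∈ plusOf κ lam Hm, B ⊆ A ∧ ∃ i, ∀ p ∈ pairsK κ B, F p.1 p.2 = i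

/-- `H⁺ →_{κ,κ} [H⁺]_ρ²`. -/
def SqBrPKK (κ lam : Cardinal.{0}) (Hm : Set (Set (Set Ordinal.{0}))) (ρ : Cardinal.{0}) : Prop :=
  ∀ F : Ordinal.{0} → Ordinal.{0} → Ordinal.{0},
    (∀ α β : Ordinal.{0}, α < β → β < κ.ord → F α β < ρ.ord) →
    ∀ A ∈ plusOf κ lam Hm, ∃ B ∈ plusOf κ lam Hm, B ⊆ A ∧
      {ξ | ∃ p ∈ pairsKK κ B, F p.1 p.2 = ξ} ≠ Iio ρ.ord

/-- The class `K(κ,λ)`. -/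
def Kset (κ lam : Cardinal.{0}) : Set Cardinal.{0} :=
  {σ | lam ≤ σ ∧ ∃ T ⊆ smallSet κ lam, Cardinal.lift.{1} σ = #T ∧
    ∀ a ∈ smallSet κ lam, #{t ∈ T | t ⊆ a} < Cardinal.lift.{1} κ}

end

end PaperFormal

namespace PaperFormal


section AuxLemmas

lemma leastCard_le {X : Type 1} {P : Set X → Prop} {F : Set X} (hP : P F)
    {c : Cardinal.{0}} (hc : Cardinal.lift.{1} c = #F) : leastCard P ≤ c :=
  csInf_le (OrderBot.bddBelow _) ⟨F, hP, hc⟩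

lemma leastCard_spec {X : Type 1} {P : Set X → Prop} {F₀ : Set X} (hF : P F₀)
    {c₀ : Cardinal.{0}} (hc : Cardinal.lift.{1} c₀ = #F₀) :
    ∃ F : Set X, P F ∧ Cardinal.lift.{1} (leastCard P) = #F :=
  csInf_mem (⟨c₀, F₀, hF, hc⟩ : Set.Nonempty {c | ∃ F : Set X, P F ∧ Cardinal.lift.{1} c = #F})

lemma down_of_le_lift {c : Cardinal.{1}} {d : Cardinal.{0}} (h : c ≤ Cardinal.lift.{1} d) :
    ∃ e ≤ d, Cardinal.lift.{1} e = c := by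
  obtain ⟨e, he⟩ := Cardinal.mem_range_lift_of_le h
  exact ⟨e, Cardinal.lift_le.1 (he ▸ h), he⟩

lemma isRegular_lift {c : Cardinal.{0}} (h : c.IsRegular) :
    (Cardinal.lift.{1} c).IsRegular := by
  constructor
  · calc ℵ₀ = Cardinal.lift.{1} ℵ₀ := (Cardinal.lift_aleph0).symm
    _ ≤ _ := Cardinal.lift_le.2 h.1
  · rw [← Cardinal.lift_ord, ← Ordinal.lift_cof]
    exact Cardinal.lift_le.2 h.2

lemma mk_biUnion_lt {κ : Cardinal.{0}} (hreg : κ.IsRegular) {ι : Type 1} (s : Set ι)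
    (t : ι → Set Ordinal.{0}) (hs : #s < Cardinal.lift.{1} κ)
    (ht : ∀ i ∈ s, #(t i) < Cardinal.lift.{1} κ) :
    #(⋃ i ∈ s, t i) < Cardinal.lift.{1} κ := by
  have hlr := isRegular_lift hreg
  refine (Cardinal.mk_biUnion_le t s).trans_lt (Cardinal.mul_lt_of_lt hlr.1 hs ?_)
  exact Cardinal.iSup_lt_of_isRegular hlr hs fun i => ht i.1 i.2

lemma bounded_of_small {κ : Cardinal.{0}} (hreg : κ.IsRegular) (s : Set Ordinal.{0})
    (hsub : s ⊆ Iio κ.ord) (hs : #s < Cardinal.lift.{1} κ) : ∃ γ < κ.ord, s ⊆ Iio γ := by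
  obtain ⟨d, hd⟩ := Cardinal.mem_range_lift_of_le hs.le
  have hdκ : d < κ := Cardinal.lift_lt.1 (hd ▸ hs)
  have hmk : #(ULift.{1} d.out) = #(↥s) := by rw [Cardinal.mk_uLift, Cardinal.mk_out, hd]
  obtain ⟨e⟩ := Cardinal.eq.1 hmk
  set f : d.out → Ordinal.{0} := fun i => (e (ULift.up i)).1 with hf
  have hfb : ∀ i, f i < κ.ord := fun i => hsub (e (ULift.up i)).2
  have hsup : iSup f < κ.ord := by
    refine Ordinal.iSup_lt_ord ?_ hfb
    rw [hreg.cof_eq, Cardinal.mk_out]; exact hdκ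
  refine ⟨iSup f + 1, ?_, ?_⟩
  · exact (Cardinal.isSuccLimit_ord hreg.1).succ_lt hsup
  · intro α hα
    have hαf : α = f (e.symm ⟨α, hα⟩).down := by
      rw [hf]
      simp only [ULift.up_down, Equiv.apply_symm_apply]
    rw [mem_Iio, hαf]
    exact lt_of_le_of_lt (le_ciSup (Ordinal.bddAbove_range f) _) (lt_add_one _)

lemma mk_subsets_le {α : Type 1} (T : Set α) (Y : Set (Set α)) (hY : ∀ A ∈ Y, A ⊆ T) :
    #Y ≤ 2 ^ #T := by
  have h : #Y ≤ #(Set ↥T) := by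
    refine Cardinal.mk_le_of_injective (f := fun A => {x : ↥T | x.1 ∈ A.1}) ?_
    rintro ⟨A, hA⟩ ⟨B, hB⟩ h
    simp only [Subtype.mk.injEq] at h ⊢
    ext x
    constructor
    · intro hx
      have h1 : (⟨x, hY A hA hx⟩ : ↥T) ∈ {x : ↥T | x.1 ∈ A} := hx
      rw [h] at h1; exact h1
    · intro hx
      have h1 : (⟨x, hY B hB hx⟩ : ↥T) ∈ {x : ↥T | x.1 ∈ B} := hx
      rw [← h] at h1; exact h1
  simpa [Cardinal.mk_set] using h

lemma mk_Iio_lam (lam : Cardinal.{0}) :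
    #(Iio lam.ord : Set Ordinal.{0}) = Cardinal.lift.{1} lam := by
  rw [Ordinal.mk_Iio_ordinal, Cardinal.card_ord]

lemma singleton_mem_smallSet {κ lam : Cardinal.{0}} (hκ : 1 < κ) {α : Ordinal.{0}}
    (hα : α < lam.ord) : ({α} : Set Ordinal.{0}) ∈ smallSet κ lam := by
  refine ⟨singleton_subset_iff.2 hα, ?_⟩
  rw [Cardinal.mk_singleton]
  calc (1 : Cardinal.{1}) = Cardinal.lift.{1} 1 := by simp
  _ < Cardinal.lift.{1} κ := Cardinal.lift_lt.2 hκ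

lemma lam_le_mk_smallSet {κ lam : Cardinal.{0}} (hκ : 1 < κ) :
    Cardinal.lift.{1} lam ≤ #(smallSet κ lam) := by
  rw [← mk_Iio_lam lam]
  refine Cardinal.mk_le_of_injective
    (f := fun α : ↥(Iio lam.ord) =>
      (⟨{α.1}, singleton_mem_smallSet hκ α.2⟩ : ↥(smallSet κ lam))) ?_
  rintro ⟨α, hα⟩ ⟨β, hβ⟩ h
  simp only [Subtype.mk.injEq, singleton_eq_singleton_iff] at h
  exact Subtype.ext h

lemma mk_smallSet_le (κ lam : Cardinal.{0}) :
    #(smallSet κ lam) ≤ Cardinal.lift.{1} ((2 : Cardinal.{0}) ^ lam) := by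
  have h := mk_subsets_le (Iio lam.ord) (smallSet κ lam) (fun a ha => ha.1)
  rw [mk_Iio_lam lam, ← Cardinal.lift_two_power] at h
  exact h

lemma mk_family_le {κ lam : Cardinal.{0}} (Y : Set (Set (Set Ordinal.{0})))
    (hY : ∀ A ∈ Y, A ⊆ smallSet κ lam) : #Y ≤ Cardinal.lift.{1} ((2 : Cardinal.{0}) ^ (2 : Cardinal.{0}) ^ lam) := by
  have h := mk_subsets_le (smallSet κ lam) Y hY
  calc #Y ≤ (2 : Cardinal.{1}) ^ #(smallSet κ lam) := h
  _ ≤ 2 ^ Cardinal.lift.{1} ((2 : Cardinal.{0}) ^ lam) :=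
      Cardinal.power_le_power_left two_ne_zero (mk_smallSet_le κ lam)
  _ = Cardinal.lift.{1} ((2 : Cardinal.{0}) ^ (2 : Cardinal.{0}) ^ lam) := (Cardinal.lift_two_power _).symm

end AuxLemmas

/-- If `H` is an ideal on `P_κ(λ)` with `a_H = κ`, then there is an ideal `K`
on `P_κ(λ)` that is not a weak `π`-point, with `cof(K) ≤ cof(H)` and `cof̄(K) ≤ cof̄(H)`. -/
theorem exists_not_weakPiPoint (κ lam : Cardinal.{0}) (hreg : κ.IsRegular) (huc : ℵ₀ < κ)
    (hlt : κ < lam) (H : IdealP κ lam) (ha : aNum H = κ) :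
    ∃ K : IdealP κ lam, ¬ WeakPiPoint K ∧ K.cof ≤ H.cof ∧ K.cofBar ≤ H.cofBar := by
  have h1κ : 1 < κ := one_lt_aleph0.trans huc
  have haleK : ℵ₀ ≤ Cardinal.lift.{1} κ := by
    calc ℵ₀ = Cardinal.lift.{1} ℵ₀ := Cardinal.lift_aleph0.symm
    _ ≤ _ := Cardinal.lift_le.2 hreg.1
  have h0K : (0 : Cardinal.{1}) < Cardinal.lift.{1} κ := aleph0_pos.trans_le haleK
  have h1K : (1 : Cardinal.{1}) < Cardinal.lift.{1} κ := one_lt_aleph0.trans_le haleK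
  -- Step 1: extract a MAD family of size κ
  have hex : ∃ Q, IsMad H Q := by
    by_contra hne
    have h2 : aNum H = 2 ^ Order.succ (downCard #(smallSet κ lam)) := by
      rw [aNum, if_neg hne]
    have hd : Cardinal.lift.{1} (downCard #(smallSet κ lam)) = #(smallSet κ lam) := by
      have hne2 : {d : Cardinal.{0} | Cardinal.lift.{1} d = #(smallSet κ lam)}.Nonempty := by
        obtain ⟨e, _, he⟩ := down_of_le_lift (mk_smallSet_le κ lam)
        exact ⟨e, he⟩
      exact csInf_mem hne2
    have hlam : lam ≤ downCard #(smallSet κ lam) := by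
      rw [← Cardinal.lift_le.{1}, hd]; exact lam_le_mk_smallSet h1κ
    have hgt : κ < aNum H := by
      rw [h2]
      calc κ < lam := hlt
      _ ≤ downCard #(smallSet κ lam) := hlam
      _ < Order.succ (downCard #(smallSet κ lam)) := Order.lt_succ _
      _ ≤ 2 ^ Order.succ (downCard #(smallSet κ lam)) := (Cardinal.cantor _).le
    exact absurd ha hgt.ne'
  obtain ⟨Q, hmad, hQcard⟩ : ∃ Q, IsMad H Q ∧ Cardinal.lift.{1} κ = #Q := by
    obtain ⟨Q₀, hQ₀⟩ := id hex
    have hb : #Q₀ ≤ Cardinal.lift.{1} ((2 : Cardinal.{0}) ^ (2 : Cardinal.{0}) ^ lam) :=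
      mk_family_le _ (fun A hA => (hQ₀.1 hA).1)
    obtain ⟨c₀, _, hc₀⟩ := down_of_le_lift hb
    have hmem := csInf_mem
      (⟨c₀, Q₀, hQ₀, hc₀⟩ :
        Set.Nonempty {c | ∃ Q, IsMad H Q ∧ Cardinal.lift.{1} c = #Q})
    have heq : aNum H = sInf {c | ∃ Q, IsMad H Q ∧ Cardinal.lift.{1} c = #Q} := by
      rw [aNum, if_pos hex]
    rw [heq] at ha
    obtain ⟨Q, hQ, hQc⟩ := hmem
    exact ⟨Q, hQ, by rw [← ha]; exact hQc⟩
  -- Step 2: enumerate Q along κ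
  obtain ⟨e⟩ : Nonempty (↥(Iio κ.ord) ≃ ↥Q) := by
    refine Cardinal.eq.1 ?_
    rw [Ordinal.mk_Iio_ordinal, Cardinal.card_ord, hQcard]
  set f : Ordinal.{0} → Set (Set Ordinal.{0}) :=
    fun α => if h : α < κ.ord then (e ⟨α, h⟩ : Set (Set Ordinal.{0})) else ∅ with hfdef
  have hfe : ∀ (α : Ordinal.{0}) (h : α < κ.ord),
      f α = ((e ⟨α, h⟩ : ↥Q) : Set (Set Ordinal.{0})) := fun α h => dif_pos h
  have hfQ : ∀ {α : Ordinal.{0}}, α < κ.ord → f α ∈ Q := by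
    intro α h
    rw [hfe α h]; exact (e ⟨α, h⟩).2
  have hfsub : ∀ {α : Ordinal.{0}}, α < κ.ord → f α ⊆ smallSet κ lam :=
    fun h => (hmad.1 (hfQ h)).1
  have hfnm : ∀ {α : Ordinal.{0}}, α < κ.ord → f α ∉ H.mem :=
    fun h => (hmad.1 (hfQ h)).2
  have hfad : ∀ {α β : Ordinal.{0}}, α < κ.ord → β < κ.ord → α ≠ β →
      f α ∩ f β ∈ H.mem := by
    intro α β hα hβ hne
    refine hmad.2.2.1 _ (hfQ hα) _ (hfQ hβ) ?_
    intro hEq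
    have h2 : (⟨α, hα⟩ : ↥(Iio κ.ord)) = ⟨β, hβ⟩ := by
      refine e.injective (Subtype.ext ?_)
      rw [hfe α hα, hfe β hβ] at hEq
      exact hEq
    exact hne (congrArg Subtype.val h2)
  have hfsurj : ∀ A ∈ Q, ∃ α, ∃ h : α < κ.ord, f α = A := by
    intro A hA
    refine ⟨(e.symm ⟨A, hA⟩).1, (e.symm ⟨A, hA⟩).2, ?_⟩
    rw [hfe _ (e.symm ⟨A, hA⟩).2]
    exact congrArg Subtype.val (e.apply_symm_apply ⟨A, hA⟩)
  -- Step 3: the ideal K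
  set Exc : Set (Set Ordinal.{0}) → Set Ordinal.{0} :=
    fun A => {α | α < κ.ord ∧ A ∩ f α ∉ H.mem} with hExcdef
  set Kmem : Set (Set (Set Ordinal.{0})) :=
    {A | A ⊆ smallSet κ lam ∧ #(Exc A) < Cardinal.lift.{1} κ} with hKmemdef
  have hExcIio : ∀ A, Exc A ⊆ Iio κ.ord := fun A α hα => hα.1
  have hHK : ∀ A ∈ H.mem, A ∈ Kmem := by
    intro A hA
    refine ⟨H.subset_pk A hA, ?_⟩
    have h2 : Exc A = ∅ := by
      ext α
      simp only [hExcdef, mem_setOf_eq, mem_empty_iff_false, iff_false, not_and, not_not]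
      exact fun hα => H.subset_mem A hA _ inter_subset_left
    rw [h2, Cardinal.mk_emptyCollection]
    exact h0K
  have hsubK : ∀ A ∈ Kmem, ∀ B ⊆ A, B ∈ Kmem := by
    intro A hA B hBA
    refine ⟨hBA.trans hA.1, lt_of_le_of_lt (Cardinal.mk_le_mk_of_subset ?_) hA.2⟩
    intro α hα
    exact ⟨hα.1, fun hm => hα.2 (H.subset_mem _ hm _ (inter_subset_inter_left _ hBA))⟩
  have hUnK : ∀ X : Set (Set (Set Ordinal.{0})), X ⊆ Kmem →
      #X < Cardinal.lift.{1} κ → ⋃₀ X ∈ Kmem := by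
    intro X hX hXc
    refine ⟨sUnion_subset fun A hA => (hX hA).1, ?_⟩
    have hsub2 : Exc (⋃₀ X) ⊆ ⋃ A ∈ X, Exc A := by
      intro α hα
      by_contra hcon
      simp only [mem_iUnion, not_exists] at hcon
      have hall : ∀ A ∈ X, A ∩ f α ∈ H.mem := by
        intro A hA
        by_contra hm
        exact hcon A hA ⟨hα.1, hm⟩
      have himg : (fun A => A ∩ f α) '' X ⊆ H.mem := by
        rintro _ ⟨A, hA, rfl⟩; exact hall A hA
      have hU : ⋃₀ ((fun A => A ∩ f α) '' X) ∈ H.mem :=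
        H.sUnion_mem _ himg (lt_of_le_of_lt Cardinal.mk_image_le hXc)
      have heq : ⋃₀ ((fun A => A ∩ f α) '' X) = (⋃₀ X) ∩ f α := by
        ext x
        simp only [sUnion_image, mem_iUnion, mem_inter_iff, mem_sUnion]
        constructor
        · rintro ⟨A, hA, hx1, hx2⟩; exact ⟨⟨A, hA, hx1⟩, hx2⟩
        · rintro ⟨⟨A, hA, hx1⟩, hx2⟩; exact ⟨A, hA, hx1, hx2⟩
      rw [heq] at hU
      exact hα.2 hU
    exact lt_of_le_of_lt (Cardinal.mk_le_mk_of_subset hsub2)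
      (mk_biUnion_lt hreg X Exc hXc fun A hA => (hX hA).2)
  have hKne : smallSet κ lam ∉ Kmem := by
    intro hK
    have hEq : Exc (smallSet κ lam) = Iio κ.ord := by
      ext α
      simp only [hExcdef, mem_setOf_eq, mem_Iio]
      constructor
      · exact fun h => h.1
      · intro h
        refine ⟨h, ?_⟩
        rw [inter_eq_self_of_subset_right (hfsub h)]
        exact hfnm h
    have h2 := hK.2
    rw [hEq, Ordinal.mk_Iio_ordinal, Cardinal.card_ord] at h2
    exact lt_irrefl _ h2
  have hfK : ∀ α, α < κ.ord → f α ∈ Kmem := by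
    intro α hα
    refine ⟨hfsub hα, ?_⟩
    have h2 : Exc (f α) ⊆ {α} := by
      intro β hβ
      by_contra hne
      have hba : α ≠ β := fun h => hne (by rw [← h]; exact mem_singleton α)
      exact hβ.2 (hfad hα hβ.1 hba)
    calc #(Exc (f α)) ≤ #({α} : Set Ordinal.{0}) := Cardinal.mk_le_mk_of_subset h2
    _ = 1 := Cardinal.mk_singleton α
    _ < Cardinal.lift.{1} κ := h1K
  set K : IdealP κ lam :=
    ⟨Kmem, fun A hA => hA.1, fun A hA => hHK A (H.fine hA), hsubK, hUnK, hKne⟩ with hKdef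
  -- auxiliary facts used in both cofinality bounds
  have hempty : (∅ : Set (Set Ordinal.{0})) ∈ H.mem := by
    refine H.fine ⟨empty_subset _, (∅ : Set Ordinal.{0}), ⟨empty_subset _, ?_⟩, ?_⟩
    · rw [Cardinal.mk_emptyCollection]; exact h0K
    · exact fun b hb => absurd hb (notMem_empty b)
  have hsing : ∀ a ∈ smallSet κ lam, ({a} : Set (Set Ordinal.{0})) ∈ H.mem := by
    intro a ha
    have hns : ¬ Iio lam.ord ⊆ a := by
      intro hsub
      have h1 : Cardinal.lift.{1} lam ≤ #a := by
        rw [← mk_Iio_lam lam]; exact Cardinal.mk_le_mk_of_subset hsub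
      exact absurd (Cardinal.lift_lt.1 (h1.trans_lt ha.2)) (lt_asymm hlt)
    obtain ⟨ξ, hξ1, hξ2⟩ := not_subset.1 hns
    refine H.fine ⟨singleton_subset_iff.2 ha, {ξ}, singleton_mem_smallSet h1κ hξ1, ?_⟩
    intro b hb
    rw [mem_singleton_iff] at hb
    subst hb
    intro hba
    exact hξ2 (hba (mem_singleton ξ))
  set U : Ordinal.{0} → Set (Set Ordinal.{0}) := fun γ => ⋃ α ∈ Iio γ, f α with hUdef
  have hUK : ∀ γ, γ < κ.ord → U γ ∈ Kmem := by
    intro γ hγ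
    have h1 : ⋃₀ (f '' Iio γ) = U γ := by rw [hUdef, sUnion_image]
    rw [← h1]
    refine hUnK _ ?_ ?_
    · rintro _ ⟨α, hα, rfl⟩; exact hfK α (hα.trans hγ)
    · refine lt_of_le_of_lt Cardinal.mk_image_le ?_
      rw [Ordinal.mk_Iio_ordinal]
      exact Cardinal.lift_lt.2 (Cardinal.lt_ord.1 hγ)
  have hC : ∀ A ∈ Kmem, ∀ γ, Exc A ⊆ Iio γ → A \ U γ ∈ H.mem := by
    intro A hA γ hγ
    by_contra hCm
    have hCp : A \ U γ ∈ H.plus := ⟨diff_subset.trans hA.1, hCm⟩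
    obtain ⟨A', hA'Q, hA'p⟩ := hmad.2.2.2 _ hCp
    obtain ⟨α, hακ, rfl⟩ := hfsurj A' hA'Q
    by_cases hαγ : α < γ
    · have hcap : f α ∩ (A \ U γ) = ∅ := by
        ext x
        constructor
        · rintro ⟨hx1, _, hx3⟩
          exact (hx3 (mem_biUnion (mem_Iio.2 hαγ) hx1)).elim
        · intro hx
          exact absurd hx (notMem_empty x)
      rw [hcap] at hA'p
      exact hA'p.2 hempty
    · have hm : A ∩ f α ∈ H.mem := by
        by_contra hm
        exact absurd (hγ ⟨hακ, hm⟩) (by simpa using hαγ)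
      refine hA'p.2 (H.subset_mem _ hm _ ?_)
      rintro x ⟨hx1, hx2, _⟩
      exact ⟨hx2, hx1⟩
  obtain ⟨c₁, _, hc₁⟩ := down_of_le_lift (mk_family_le H.mem H.subset_pk)
  refine ⟨K, ?_, ?_, ?_⟩
  -- Part A : not a weak π-point
  · intro hw
    obtain ⟨B, hBp, hBsub, hBf⟩ := hw f (fun α hα => hfK α hα)
      (smallSet κ lam) ⟨Subset.rfl, hKne⟩
    have hBnm : B ∉ Kmem := hBp.2
    have hBm : B ⊆ smallSet κ lam := hBp.1
    have hne : Exc B ≠ ∅ := by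
      intro h0
      refine hBnm ⟨hBm, ?_⟩
      rw [h0, Cardinal.mk_emptyCollection]
      exact h0K
    obtain ⟨α, hα⟩ := nonempty_iff_ne_empty.2 hne
    exact hα.2 (H.fine (hBf α hα.1))
  -- Part B : cof K ≤ cof H
  · have hPcofH : H.mem ⊆ H.mem ∧ ∀ A, A ∈ H.mem ↔ ∃ B ∈ H.mem, A ⊆ B :=
      ⟨Subset.rfl, fun A => ⟨fun h => ⟨A, h, Subset.rfl⟩,
        fun ⟨B, hB, hAB⟩ => H.subset_mem B hB A hAB⟩⟩
    obtain ⟨X, hX, hXc⟩ := leastCard_spec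
      (P := fun X : Set (Set (Set Ordinal.{0})) =>
        X ⊆ H.mem ∧ ∀ A, A ∈ H.mem ↔ ∃ B ∈ X, A ⊆ B) hPcofH hc₁
    have hXc' : Cardinal.lift.{1} H.cof = #X := hXc
    have hXlb : Cardinal.lift.{1} κ ≤ #X := by
      by_contra hcon
      push_neg at hcon
      have hU : ⋃₀ X ∈ H.mem := H.sUnion_mem X hX.1 hcon
      have hss : smallSet κ lam ⊆ ⋃₀ X := by
        intro a ha
        obtain ⟨B, hB, hsB⟩ := (hX.2 {a}).1 (hsing a ha)
        exact ⟨B, hB, hsB (mem_singleton a)⟩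
      exact H.ne_top (H.subset_mem _ hU _ hss)
    have hκcof : κ ≤ H.cof := by
      rw [← Cardinal.lift_le.{1}, hXc']; exact hXlb
    set Y : Set (Set (Set Ordinal.{0})) :=
      (fun p : Set (Set Ordinal.{0}) × Ordinal.{0} => p.1 ∪ U p.2) '' (X ×ˢ Iio κ.ord)
      with hYdef
    have hYsub : Y ⊆ Kmem := by
      rintro _ ⟨⟨B, γ⟩, ⟨hB, hγ⟩, rfl⟩
      show B ∪ U γ ∈ Kmem
      have h2 : ⋃₀ {B, U γ} = B ∪ U γ := sUnion_pair B (U γ)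
      rw [← h2]
      refine hUnK _ ?_ ?_
      · intro C hC2
        rcases hC2 with rfl | rfl
        · exact hHK _ (hX.1 hB)
        · exact hUK _ hγ
      · refine lt_of_lt_of_le ?_ haleK
        exact ((finite_singleton (U γ)).insert B).lt_aleph0
    have hYcof : ∀ A, A ∈ Kmem ↔ ∃ S ∈ Y, A ⊆ S := by
      intro A
      constructor
      · intro hA
        obtain ⟨γ, hγκ, hγ⟩ := bounded_of_small hreg (Exc A) (hExcIio A) hA.2
        obtain ⟨B, hB, hCB⟩ := (hX.2 _).1 (hC A hA γ hγ)
        refine ⟨B ∪ U γ, ⟨(B, γ), ⟨hB, hγκ⟩, rfl⟩, ?_⟩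
        intro x hx
        by_cases hxU : x ∈ U γ
        · exact Or.inr hxU
        · exact Or.inl (hCB ⟨hx, hxU⟩)
      · rintro ⟨S, hS, hAS⟩
        exact hsubK S (hYsub hS) A hAS
    have hYcard : #Y ≤ Cardinal.lift.{1} H.cof := by
      refine le_trans Cardinal.mk_image_le (le_of_eq ?_)
      calc #(↥(X ×ˢ Iio κ.ord)) = #(↥X × ↥(Iio κ.ord)) :=
            Cardinal.mk_congr (Equiv.Set.prod _ _)
      _ = #X * #(Iio κ.ord : Set Ordinal.{0}) := by
            rw [Cardinal.mk_prod, Cardinal.lift_id, Cardinal.lift_id]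
      _ = Cardinal.lift.{1} H.cof * Cardinal.lift.{1} κ := by
            rw [← hXc', Ordinal.mk_Iio_ordinal, Cardinal.card_ord]
      _ = Cardinal.lift.{1} (H.cof * κ) := (Cardinal.lift_mul _ _).symm
      _ = Cardinal.lift.{1} H.cof := by
            rw [Cardinal.mul_eq_left (hreg.1.trans hκcof) hκcof
              (aleph0_pos.trans_le hreg.1).ne']
    obtain ⟨c₂, hc₂le, hc₂⟩ := down_of_le_lift hYcard
    exact (leastCard_le ⟨hYsub, hYcof⟩ hc₂).trans hc₂le
  -- Part C : cofBar K ≤ cofBar H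
  · have hPbarH : H.mem ⊆ H.mem ∧ ∀ A ∈ H.mem, ∃ x ⊆ H.mem,
        #x < Cardinal.lift.{1} κ ∧ A ⊆ ⋃₀ x := by
      refine ⟨Subset.rfl, fun A hA => ⟨{A}, singleton_subset_iff.2 hA, ?_, ?_⟩⟩
      · rw [Cardinal.mk_singleton]; exact h1K
      · intro x hx; exact ⟨A, mem_singleton A, hx⟩
    obtain ⟨X', hX', hX'c⟩ := leastCard_spec
      (P := fun X : Set (Set (Set Ordinal.{0})) =>
        X ⊆ H.mem ∧ ∀ A ∈ H.mem, ∃ x ⊆ X, #x < Cardinal.lift.{1} κ ∧ A ⊆ ⋃₀ x) hPbarH hc₁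
    have hX'c' : Cardinal.lift.{1} H.cofBar = #X' := hX'c
    have hX'lb : Cardinal.lift.{1} κ ≤ #X' := by
      by_contra hcon
      push_neg at hcon
      have hU : ⋃₀ X' ∈ H.mem := H.sUnion_mem X' hX'.1 hcon
      have hss : smallSet κ lam ⊆ ⋃₀ X' := by
        intro a ha
        obtain ⟨x, hxX, _, hax⟩ := hX'.2 {a} (hsing a ha)
        obtain ⟨B, hB, haB⟩ := hax (mem_singleton a)
        exact ⟨B, hxX hB, haB⟩
      exact H.ne_top (H.subset_mem _ hU _ hss)
    have hκbar : κ ≤ H.cofBar := by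
      rw [← Cardinal.lift_le.{1}, hX'c']; exact hX'lb
    set Y' : Set (Set (Set Ordinal.{0})) := X' ∪ (f '' Iio κ.ord) with hY'def
    have hY'sub : Y' ⊆ Kmem := by
      rintro S (hS | ⟨α, hα, rfl⟩)
      · exact hHK S (hX'.1 hS)
      · exact hfK α hα
    have hY'cov : ∀ A ∈ Kmem, ∃ x ⊆ Y', #x < Cardinal.lift.{1} κ ∧ A ⊆ ⋃₀ x := by
      intro A hA
      obtain ⟨γ, hγκ, hγ⟩ := bounded_of_small hreg (Exc A) (hExcIio A) hA.2
      obtain ⟨x, hxX, hxc, hCx⟩ := hX'.2 _ (hC A hA γ hγ)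
      refine ⟨x ∪ f '' Iio γ,
        union_subset (hxX.trans subset_union_left)
          ((image_mono (f := f) (Iio_subset_Iio hγκ.le)).trans subset_union_right), ?_, ?_⟩
      · refine lt_of_le_of_lt (Cardinal.mk_union_le _ _)
          (Cardinal.add_lt_of_lt haleK hxc ?_)
        refine lt_of_le_of_lt Cardinal.mk_image_le ?_
        rw [Ordinal.mk_Iio_ordinal]
        exact Cardinal.lift_lt.2 (Cardinal.lt_ord.1 hγκ)
      · intro a haA
        by_cases haU : a ∈ U γ
        · rw [hUdef] at haU
          obtain ⟨α, hα, hmem⟩ := mem_iUnion₂.1 haU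
          exact mem_sUnion.2 ⟨f α, mem_union_right _ ⟨α, hα, rfl⟩, hmem⟩
        · obtain ⟨B, hB, haB⟩ := hCx ⟨haA, haU⟩
          exact mem_sUnion.2 ⟨B, mem_union_left _ hB, haB⟩
    have hY'card : #Y' ≤ Cardinal.lift.{1} H.cofBar := by
      refine le_trans (Cardinal.mk_union_le _ _) ?_
      have h2 : #(f '' Iio κ.ord) ≤ Cardinal.lift.{1} κ := by
        refine le_trans Cardinal.mk_image_le ?_
        rw [Ordinal.mk_Iio_ordinal, Cardinal.card_ord]
      calc #X' + #(f '' Iio κ.ord)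
          ≤ Cardinal.lift.{1} H.cofBar + Cardinal.lift.{1} κ :=
            add_le_add (le_of_eq hX'c'.symm) h2
      _ = Cardinal.lift.{1} (H.cofBar + κ) := (Cardinal.lift_add _ _).symm
      _ = Cardinal.lift.{1} H.cofBar := by
            rw [Cardinal.add_eq_left (hreg.1.trans hκbar) hκbar]
    obtain ⟨c₃, hc₃le, hc₃⟩ := down_of_le_lift hY'card
    exact (leastCard_le ⟨hY'sub, hY'cov⟩ hc₃).trans hc₃le

end PaperFormal
end

section
/- Suppose that for every A ∈ I_{κ,λ}⁺ with A ⊆ {a ∈ P_κ(λ) : ∪(a∩κ) ∈ a} there is B ∈ I_{κ,λ}⁺ ∩ P(A) such that ∪(a∩κ) ∈ b for all a, b ∈ B with ∪(a∩κ) < ∪(b∩κ). Then for every σ ∈ K(κ,λ), every ideal J on κ with cof̄(J) ≤ σ is weakly selective (that is, σ < non̄_κ(weakly selective) for every σ ∈ K(κ,λ)). -/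
open Cardinal Set

namespace PaperFormal

section Statement7Aux

open Classical

variable {κ lam : Cardinal.{0}}

private lemma aleph0_lt_liftK (huc : ℵ₀ < κ) : ℵ₀ < Cardinal.lift.{1} κ := by
  simpa using Cardinal.lift_lt.{0,1}.mpr huc

private lemma isRegular_liftK (hreg : κ.IsRegular) : (Cardinal.lift.{1} κ).IsRegular := by
  constructor
  · simpa using Cardinal.lift_le.{1}.mpr hreg.aleph0_le
  · rw [← Cardinal.lift_ord, ← Ordinal.lift_cof, hreg.cof_eq]

private lemma sSup_lt_ord' (hreg : κ.IsRegular) {S : Set Ordinal.{0}}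
    (hS : S ⊆ Iio κ.ord) (hcard : #S < Cardinal.lift.{1} κ) : sSup S < κ.ord := by
  rcases Cardinal.mem_range_lift_of_le hcard.le with ⟨c0, hc0⟩
  have hc0κ : c0 < κ := by rwa [← Cardinal.lift_lt.{0,1}, hc0]
  have he : Nonempty (c0.out ≃ ↥S) := by
    rw [← Cardinal.lift_mk_eq'.{0,1}]
    rw [Cardinal.mk_out, hc0]; exact (Cardinal.lift_id'.{0,1} _).symm
  obtain ⟨e⟩ := he
  have hrange : Set.range (fun i : c0.out => ((e i : ↥S) : Ordinal.{0})) = S := by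
    ext x
    constructor
    · rintro ⟨i, rfl⟩; exact (e i).2
    · intro hx; exact ⟨e.symm ⟨x, hx⟩, by simp⟩
  have : (⨆ i : c0.out, ((e i : ↥S) : Ordinal.{0})) < κ.ord := by
    apply Cardinal.iSup_lt_ord_of_isRegular hreg
    · rwa [Cardinal.mk_out]
    · intro i; exact hS (e i).2
  rwa [iSup, hrange] at this

private lemma card_sUnion_lt (hreg : κ.IsRegular) (huc : ℵ₀ < κ) {X : Set (Set Ordinal.{0})}
    (hX : #X < Cardinal.lift.{1} κ) (h : ∀ s ∈ X, #s < Cardinal.lift.{1} κ) :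
    #(⋃₀ X) < Cardinal.lift.{1} κ := by
  refine lt_of_le_of_lt (Cardinal.mk_sUnion_le X) ?_
  apply Cardinal.mul_lt_of_lt (aleph0_lt_liftK huc).le hX
  exact Cardinal.iSup_lt_of_isRegular (isRegular_liftK hreg) hX fun s => h s s.2

private lemma smallSet_sUnion (hreg : κ.IsRegular) (huc : ℵ₀ < κ) {X : Set (Set Ordinal.{0})}
    (hX : X ⊆ smallSet κ lam) (hcard : #X < Cardinal.lift.{1} κ) : ⋃₀ X ∈ smallSet κ lam := by
  refine ⟨?_, card_sUnion_lt hreg huc hcard fun s hs => (hX hs).2⟩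
  rintro x ⟨s, hs, hx⟩; exact (hX hs).1 hx

private lemma smallSet_insert (huc : ℵ₀ < κ) (hlt : κ < lam) {a : Set Ordinal.{0}}
    (ha : a ∈ smallSet κ lam) {α : Ordinal.{0}} (hα : α < κ.ord) :
    insert α a ∈ smallSet κ lam := by
  constructor
  · intro x hx
    rcases hx with rfl | hx
    · exact lt_trans hα (Cardinal.ord_lt_ord.mpr hlt)
    · exact ha.1 hx
  · refine lt_of_le_of_lt (Cardinal.mk_insert_le) ?_
    exact Cardinal.add_lt_of_lt (aleph0_lt_liftK huc).le ha.2
      (lt_of_lt_of_le Cardinal.one_lt_aleph0 (aleph0_lt_liftK huc).le)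

private lemma le_supK {b : Set Ordinal.{0}} {x : Ordinal.{0}} (hx : x ∈ b) (hxκ : x < κ.ord) :
    x ≤ supK κ b :=
  le_csSup (⟨κ.ord, fun y hy => hy.2.le⟩ : BddAbove (b ∩ Iio κ.ord)) ⟨hx, hxκ⟩

private lemma supK_lt (hreg : κ.IsRegular) {a : Set Ordinal.{0}}
    (ha : #a < Cardinal.lift.{1} κ) : supK κ a < κ.ord :=
  sSup_lt_ord' hreg (fun _ hx => hx.2)
    ((Cardinal.mk_le_mk_of_subset inter_subset_left).trans_lt ha)

private lemma supK_insert_eq {a : Set Ordinal.{0}} {α δ : Ordinal.{0}} (hα : α < κ.ord)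
    (hbound : ∀ γ ∈ a, γ < κ.ord → γ ≤ δ) (hδα : δ < α) : supK κ (insert α a) = α := by
  apply le_antisymm
  · refine csSup_le ⟨α, ⟨mem_insert _ _, hα⟩⟩ ?_
    rintro γ ⟨hγa, hγκ⟩
    rcases hγa with rfl | hγa
    · exact le_rfl
    · exact (hbound γ hγa hγκ).trans hδα.le
  · exact le_supK (mem_insert _ _) hα

private lemma J_mem_small (J : IdealK κ) {S : Set Ordinal.{0}} (hS : S ⊆ Iio κ.ord)
    (hcard : #S < Cardinal.lift.{1} κ) : S ∈ J.mem := by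
  have hrw : S = ⋃₀ ((fun γ => ({γ} : Set Ordinal.{0})) '' S) := by
    rw [sUnion_image, biUnion_of_singleton]
  rw [hrw]
  apply J.sUnion_mem
  · rintro _ ⟨γ, hγ, rfl⟩; exact J.singleton_mem γ (hS hγ)
  · exact (Cardinal.mk_image_le).trans_lt hcard

private lemma J_mem_union (huc : ℵ₀ < κ) (J : IdealK κ) {D E : Set Ordinal.{0}}
    (hD : D ∈ J.mem) (hE : E ∈ J.mem) : D ∪ E ∈ J.mem := by
  have hrw : D ∪ E = ⋃₀ {D, E} := (sUnion_pair D E).symm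
  rw [hrw]
  apply J.sUnion_mem
  · rintro x hx
    rcases hx with rfl | rfl
    · exact hD
    · exact hE
  · refine lt_of_le_of_lt (Cardinal.mk_insert_le) ?_
    rw [Cardinal.mk_singleton]
    exact lt_of_lt_of_le (Cardinal.add_lt_aleph0 Cardinal.one_lt_aleph0 Cardinal.one_lt_aleph0)
      (aleph0_lt_liftK huc).le

private lemma J_plus_exists (hreg : κ.IsRegular) (huc : ℵ₀ < κ) (J : IdealK κ)
    {A : Set Ordinal.{0}} (hA : A ∈ J.plus) {D : Set Ordinal.{0}} (hD : D ∈ J.mem)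
    {δ : Ordinal.{0}} (hδ : δ < κ.ord) : ∃ α ∈ A, α ∉ D ∧ δ < α := by
  by_contra hcon
  push_neg at hcon
  apply hA.2
  have hIic : (Iic δ : Set Ordinal.{0}) ∈ J.mem := by
    apply J_mem_small J
    · intro x hx; exact lt_of_le_of_lt hx hδ
    · rw [← Order.Iio_succ, Ordinal.mk_Iio_ordinal]
      rw [← Cardinal.lift_lt.{0,1}] at *
      exact Cardinal.lift_lt.mpr (Cardinal.lt_ord.mp
        ((Cardinal.isSuccLimit_ord hreg.aleph0_le).succ_lt hδ))
  apply J.subset_mem _ (J_mem_union huc J hD hIic)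
  intro α hα
  by_cases hαD : α ∈ D
  · exact Or.inl hαD
  · exact Or.inr (hcon α hα hαD)

/-- The auxiliary cofinal set used in the proof of Statement 7. -/
private def AA (κ lam : Cardinal.{0}) (T : Set (Set Ordinal.{0}))
    (cm : Set Ordinal.{0} → Set Ordinal.{0}) (A : Set Ordinal.{0})
    (w : Ordinal.{0} → Set Ordinal.{0}) : Set (Set Ordinal.{0}) :=
  {a | a ∈ smallSet κ lam ∧ supK κ a ∈ a ∧ supK κ a ∈ A ∧
    (∀ t ∈ T, t ⊆ a → supK κ a ∉ t → supK κ a ∉ cm t) ∧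
    ∀ γ ∈ a, γ < supK κ a → w γ ⊆ a}

private def clSeq (c : Set Ordinal.{0}) (w : Ordinal.{0} → Set Ordinal.{0}) :
    ℕ → Set Ordinal.{0}
  | 0 => c
  | n + 1 => clSeq c w n ∪ ⋃₀ (w '' clSeq c w n)

private lemma AA_cofinal (hreg : κ.IsRegular) (huc : ℵ₀ < κ) (hlt : κ < lam)
    (J : IdealK κ) {T : Set (Set Ordinal.{0})}
    (hTK : ∀ a ∈ smallSet κ lam, #{t ∈ T | t ⊆ a} < Cardinal.lift.{1} κ)
    {cm : Set Ordinal.{0} → Set Ordinal.{0}} (hcm : ∀ t, cm t ∈ J.mem)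
    {A : Set Ordinal.{0}} (hA : A ∈ J.plus)
    {w : Ordinal.{0} → Set Ordinal.{0}} (hw : ∀ γ, w γ ∈ smallSet κ lam) :
    ∀ c ∈ smallSet κ lam, ∃ a ∈ AA κ lam T cm A w, c ⊆ a := by
  intro c hc
  have hcl : ∀ n, clSeq c w n ∈ smallSet κ lam := by
    intro n
    induction n with
    | zero => exact hc
    | succ n ih =>
      have hun : ⋃₀ (w '' clSeq c w n) ∈ smallSet κ lam := by
        apply smallSet_sUnion hreg huc
        · rintro _ ⟨γ, _, rfl⟩; exact hw γ
        · exact (Cardinal.mk_image_le).trans_lt ih.2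
      exact ⟨union_subset ih.1 hun.1,
        lt_of_le_of_lt (Cardinal.mk_union_le _ _)
          (Cardinal.add_lt_of_lt (aleph0_lt_liftK huc).le ih.2 hun.2)⟩
  set a₀ : Set Ordinal.{0} := ⋃₀ (Set.range (clSeq c w)) with ha₀def
  have ha₀ : a₀ ∈ smallSet κ lam := by
    apply smallSet_sUnion hreg huc
    · rintro _ ⟨n, rfl⟩; exact hcl n
    · have h1 : #(Set.range (clSeq c w)) ≤ Cardinal.lift.{1,0} #ℕ := by
        simpa using Cardinal.mk_range_le_lift (f := clSeq c w)
      refine lt_of_le_of_lt h1 ?_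
      rw [Cardinal.mk_nat, Cardinal.lift_aleph0]
      exact aleph0_lt_liftK huc
  have hclosed : ∀ γ ∈ a₀, w γ ⊆ a₀ := by
    rintro γ ⟨_, ⟨n, rfl⟩, hγn⟩
    intro x hx
    exact ⟨clSeq c w (n + 1), ⟨n + 1, rfl⟩, Or.inr ⟨w γ, ⟨γ, hγn, rfl⟩, hx⟩⟩
  have hD : ⋃₀ (cm '' {t ∈ T | t ⊆ a₀}) ∈ J.mem := by
    apply J.sUnion_mem
    · rintro _ ⟨t, _, rfl⟩; exact hcm t
    · exact (Cardinal.mk_image_le).trans_lt (hTK a₀ ha₀)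
  have hδ : supK κ a₀ < κ.ord := supK_lt hreg ha₀.2
  obtain ⟨α, hαA, hαD, hδα⟩ := J_plus_exists hreg huc J hA hD hδ
  have hακ : α < κ.ord := hA.1 hαA
  have hsup : supK κ (insert α a₀) = α :=
    supK_insert_eq hακ (fun γ hγ hγκ => le_supK hγ hγκ) hδα
  refine ⟨insert α a₀, ⟨smallSet_insert huc hlt ha₀ hακ, ?_, ?_, ?_, ?_⟩, ?_⟩
  · rw [hsup]; exact mem_insert _ _
  · rw [hsup]; exact hαA
  · intro t htT hta hst
    rw [hsup] at *
    have hta₀ : t ⊆ a₀ := by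
      intro x hx
      rcases hta hx with rfl | hx'
      · exact absurd hx hst
      · exact hx'
    intro hαcm
    exact hαD ⟨cm t, ⟨t, ⟨htT, hta₀⟩, rfl⟩, hαcm⟩
  · intro γ hγ hγs
    rw [hsup] at hγs
    rcases hγ with rfl | hγ
    · exact absurd rfl hγs.ne
    · exact (hclosed γ hγ).trans (subset_insert _ _)
  · intro x hx
    exact subset_insert _ _ ⟨clSeq c w 0, ⟨0, rfl⟩, hx⟩

private lemma plus_cofinal {Y : Set (Set Ordinal.{0})}
    (hY : Y ∈ plusOf κ lam (Ikl κ lam)) : ∀ c ∈ smallSet κ lam, ∃ b ∈ Y, c ⊆ b := by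
  intro c hc
  by_contra hcon
  push_neg at hcon
  exact hY.2 ⟨hY.1, c, hc, hcon⟩

private lemma core (hreg : κ.IsRegular) (huc : ℵ₀ < κ) (hlt : κ < lam)
    (hyp : ∀ A ∈ plusOf κ lam (Ikl κ lam),
      A ⊆ {a ∈ smallSet κ lam | supK κ a ∈ a} →
      ∃ B ∈ plusOf κ lam (Ikl κ lam), B ⊆ A ∧
        ∀ a ∈ B, ∀ b ∈ B, supK κ a < supK κ b → supK κ a ∈ b)
    (J : IdealK κ) {T : Set (Set Ordinal.{0})} (hTsub : T ⊆ smallSet κ lam)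
    (hTK : ∀ a ∈ smallSet κ lam, #{t ∈ T | t ⊆ a} < Cardinal.lift.{1} κ)
    {cm : Set Ordinal.{0} → Set Ordinal.{0}} (hcm : ∀ t, cm t ∈ J.mem)
    (hcov : ∀ Aa ∈ J.mem, ∃ s ⊆ T, #s < Cardinal.lift.{1} κ ∧ Aa ⊆ ⋃₀ (cm '' s))
    {A : Set Ordinal.{0}} (hA : A ∈ J.plus)
    {w : Ordinal.{0} → Set Ordinal.{0}} (hw : ∀ γ, w γ ∈ smallSet κ lam) :
    ∃ B' : Set (Set Ordinal.{0}),
      (supK κ '' B') ∈ J.plus ∧ (supK κ '' B') ⊆ A ∧ B' ⊆ AA κ lam T cm A w ∧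
      ∀ a ∈ B', ∀ b ∈ B', supK κ a < supK κ b → supK κ a ∈ b := by
  have hAAplus : AA κ lam T cm A w ∈ plusOf κ lam (Ikl κ lam) := by
    refine ⟨fun a ha => ha.1, fun hIkl => ?_⟩
    obtain ⟨_, c, hc, hno⟩ := hIkl
    obtain ⟨a, haAA, hca⟩ := AA_cofinal hreg huc hlt J hTK hcm hA hw c hc
    exact hno a haAA hca
  obtain ⟨B', hB'plus, hB'AA, hcoh⟩ := hyp _ hAAplus (fun a ha => ⟨ha.1, ha.2.1⟩)
  have hB'cof : ∀ c ∈ smallSet κ lam, ∃ b ∈ B', c ⊆ b := plus_cofinal hB'plus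
  have hBsubA : supK κ '' B' ⊆ A := by
    rintro _ ⟨b, hb, rfl⟩
    exact (hB'AA hb).2.2.1
  have hBIio : supK κ '' B' ⊆ Iio κ.ord := fun x hx => hA.1 (hBsubA hx)
  refine ⟨B', ⟨hBIio, ?_⟩, hBsubA, hB'AA, hcoh⟩
  intro hBJ
  obtain ⟨s, hsT, hscard, hscov⟩ := hcov _ hBJ
  have hu : ⋃₀ s ∈ smallSet κ lam := smallSet_sUnion hreg huc (hsT.trans hTsub) hscard
  have hδ' : supK κ (⋃₀ s) < κ.ord := supK_lt hreg hu.2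
  have hsucc : Order.succ (supK κ (⋃₀ s)) < κ.ord :=
    (Cardinal.isSuccLimit_ord hreg.aleph0_le).succ_lt hδ'
  have hc' : insert (Order.succ (supK κ (⋃₀ s))) (⋃₀ s) ∈ smallSet κ lam :=
    smallSet_insert huc hlt hu hsucc
  obtain ⟨b, hbB', hc'b⟩ := hB'cof _ hc'
  have hbAA := hB'AA hbB'
  have hβB : supK κ b ∈ supK κ '' B' := ⟨b, hbB', rfl⟩
  obtain ⟨_, ⟨t, hts, rfl⟩, hβcmt⟩ := hscov hβB
  have htb : t ⊆ b := (subset_sUnion_of_mem hts).trans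
    ((subset_insert _ _).trans hc'b)
  have hβκ : supK κ b < κ.ord := hA.1 (hbAA.2.2.1)
  have hsδβ : Order.succ (supK κ (⋃₀ s)) ≤ supK κ b :=
    le_supK (hc'b (mem_insert _ _)) hsucc
  have hβt : supK κ b ∉ t := by
    intro h
    have h1 : supK κ b ≤ supK κ (⋃₀ s) := le_supK ⟨t, hts, h⟩ hβκ
    exact absurd h1 (not_le.mpr (lt_of_lt_of_le (Order.lt_succ _) hsδβ))
  exact hbAA.2.2.2.1 t (hsT hts) htb hβt hβcmt

private lemma cofBar_witness (huc : ℵ₀ < κ) (J : IdealK κ) :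
    ∃ X : Set (Set Ordinal.{0}), X ⊆ J.mem ∧
      (∀ A ∈ J.mem, ∃ x ⊆ X, #x < Cardinal.lift.{1} κ ∧ A ⊆ ⋃₀ x) ∧
      #X ≤ Cardinal.lift.{1} J.cofBar := by
  set P : Set (Set Ordinal.{0}) → Prop := fun X =>
    X ⊆ J.mem ∧ ∀ A ∈ J.mem, ∃ x ⊆ X, #x < Cardinal.lift.{1} κ ∧ A ⊆ ⋃₀ x with hP_def
  have hPmem : P J.mem := by
    refine ⟨subset_rfl, fun A hA => ⟨{A}, singleton_subset_iff.mpr hA, ?_, ?_⟩⟩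
    · rw [Cardinal.mk_singleton]
      exact lt_of_lt_of_le Cardinal.one_lt_aleph0 (aleph0_lt_liftK huc).le
    · rw [sUnion_singleton]
  have inj : Function.Injective
      (fun A : ↥J.mem => {x : ↥(Iio κ.ord) | (x : Ordinal.{0}) ∈ (A : Set Ordinal.{0})}) := by
    intro A B h
    apply Subtype.ext
    ext y
    constructor
    · intro hy
      have hyκ : y ∈ Iio κ.ord := J.subset_iio _ A.2 hy
      exact (Set.ext_iff.mp h ⟨y, hyκ⟩).mp hy
    · intro hy
      have hyκ : y ∈ Iio κ.ord := J.subset_iio _ B.2 hy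
      exact (Set.ext_iff.mp h ⟨y, hyκ⟩).mpr hy
  have hbound : #(J.mem) ≤ Cardinal.lift.{1} (2 ^ κ) := by
    calc #(J.mem) ≤ #(Set ↥(Iio κ.ord)) := Cardinal.mk_le_of_injective inj
      _ = 2 ^ #(Iio κ.ord) := Cardinal.mk_set
      _ = 2 ^ Cardinal.lift.{1} κ := by rw [Ordinal.mk_Iio_ordinal, Cardinal.card_ord]
      _ = Cardinal.lift.{1} (2 ^ κ) := (Cardinal.lift_two_power κ).symm
  obtain ⟨c0, hc0⟩ := Cardinal.mem_range_lift_of_le hbound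
  have hne : {c : Cardinal.{0} | ∃ F, P F ∧ Cardinal.lift.{1} c = #F}.Nonempty :=
    ⟨c0, J.mem, hPmem, hc0⟩
  have hmem : J.cofBar ∈ {c : Cardinal.{0} | ∃ F, P F ∧ Cardinal.lift.{1} c = #F} :=
    csInf_mem hne
  obtain ⟨F, hF, hFcard⟩ := hmem
  exact ⟨F, hF.1, hF.2, le_of_eq hFcard.symm⟩

private lemma cm_exists (J : IdealK κ) {X T : Set (Set Ordinal.{0})}
    (hX : X ⊆ J.mem) (hcard : #X ≤ #T) (hκ : 0 < κ.ord)
    (hXcov : ∀ A ∈ J.mem, ∃ x ⊆ X, #x < Cardinal.lift.{1} κ ∧ A ⊆ ⋃₀ x) :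
    ∃ cm : Set Ordinal.{0} → Set Ordinal.{0}, (∀ t, cm t ∈ J.mem) ∧
      ∀ A ∈ J.mem, ∃ s ⊆ T, #s < Cardinal.lift.{1} κ ∧ A ⊆ ⋃₀ (cm '' s) := by
  have hempty : (∅ : Set Ordinal.{0}) ∈ J.mem :=
    J.subset_mem _ (J.singleton_mem 0 hκ) _ (empty_subset _)
  obtain ⟨e⟩ := (Cardinal.le_def _ _).mp hcard
  set cm : Set Ordinal.{0} → Set Ordinal.{0} := fun t =>
    if h : ∃ C : ↥X, ((e C : ↥T) : Set Ordinal.{0}) = t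
    then ((h.choose : ↥X) : Set Ordinal.{0}) else ∅ with hcm_def
  have hcmJ : ∀ t, cm t ∈ J.mem := by
    intro t
    rw [hcm_def]
    dsimp only
    split
    · next h => exact hX h.choose.2
    · exact hempty
  have hcm_surj : ∀ C (hC : C ∈ X), cm ((e ⟨C, hC⟩ : ↥T) : Set Ordinal.{0}) = C := by
    intro C hC
    have h : ∃ C' : ↥X, ((e C' : ↥T) : Set Ordinal.{0})
        = ((e ⟨C, hC⟩ : ↥T) : Set Ordinal.{0}) := ⟨⟨C, hC⟩, rfl⟩
    have heq : h.choose = ⟨C, hC⟩ := e.injective (Subtype.ext h.choose_spec)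
    rw [hcm_def]
    dsimp only
    rw [dif_pos h, heq]
  refine ⟨cm, hcmJ, fun A hA => ?_⟩
  obtain ⟨x, hxX, hxcard, hxcov⟩ := hXcov A hA
  refine ⟨(fun C : ↥X => ((e C : ↥T) : Set Ordinal.{0})) '' {C : ↥X | ↑C ∈ x}, ?_, ?_, ?_⟩
  · rintro _ ⟨C, _, rfl⟩; exact (e C).2
  · refine lt_of_le_of_lt Cardinal.mk_image_le (lt_of_le_of_lt ?_ hxcard)
    refine Cardinal.mk_le_of_injective
      (f := fun C : {C : ↥X | (C : Set Ordinal.{0}) ∈ x} => (⟨(C : ↥X), C.2⟩ : ↥x)) ?_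
    rintro ⟨⟨C, hC⟩, h1⟩ ⟨⟨C', hC'⟩, h2⟩ h
    have hval : C = C' := by simpa using h
    subst hval
    rfl
  · intro y hy
    obtain ⟨C, hCx, hyC⟩ := hxcov hy
    have hCX : C ∈ X := hxX hCx
    exact ⟨C, ⟨_, ⟨⟨C, hCX⟩, hCx, rfl⟩, hcm_surj C hCX⟩, hyC⟩

end Statement7Aux

/-- Suppose that for every `A ∈ I_{κ,λ}⁺` with
`A ⊆ {a ∈ P_κ(λ) : ∪(a∩κ) ∈ a}` there is `B ∈ I_{κ,λ}⁺ ∩ P(A)` with `∪(a∩κ) ∈ b` whenever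
`a, b ∈ B` and `∪(a∩κ) < ∪(b∩κ)`. Then for every `σ ∈ K(κ,λ)`, every ideal `J` on `κ` with
`cof̄(J) ≤ σ` is weakly selective. -/
theorem weaklySelective_of_small_cofBar (κ lam : Cardinal.{0}) (hreg : κ.IsRegular)
    (huc : ℵ₀ < κ) (hlt : κ < lam)
    (hyp : ∀ A ∈ plusOf κ lam (Ikl κ lam),
      A ⊆ {a ∈ smallSet κ lam | supK κ a ∈ a} →
      ∃ B ∈ plusOf κ lam (Ikl κ lam), B ⊆ A ∧
        ∀ a ∈ B, ∀ b ∈ B, supK κ a < supK κ b → supK κ a ∈ b) :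
    ∀ σ ∈ Kset κ lam, ∀ J : IdealK κ, J.cofBar ≤ σ → WeaklySelective J := by
  intro σ hσ J hco
  obtain ⟨hlamσ, T, hTsub, hTcard, hTK⟩ := hσ
  obtain ⟨X, hXsub, hXcov, hXcard⟩ := cofBar_witness huc J
  have hXT : #X ≤ #T := by
    refine hXcard.trans ?_
    rw [← hTcard]
    exact Cardinal.lift_le.mpr hco
  obtain ⟨cm, hcm, hcov⟩ := cm_exists J hXsub hXT hreg.ord_pos hXcov
  constructor
  · -- Weak P-point
    intro A hA f _ hfib
    choose sf hsfT hsfcard hsfcov using fun β : Ordinal.{0} => hcov _ (hfib β)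
    have hw : ∀ γ, ⋃₀ (sf (f γ)) ∈ smallSet κ lam := fun γ =>
      smallSet_sUnion hreg huc ((hsfT (f γ)).trans hTsub) (hsfcard (f γ))
    obtain ⟨B', hBplus, hBA, hBAA, hcoh⟩ :=
      core hreg huc hlt hyp J hTsub hTK hcm hcov hA hw
    refine ⟨supK κ '' B', hBplus, hBA, ?_⟩
    intro β
    by_cases hne : {α ∈ supK κ '' B' | f α = β}.Nonempty
    · obtain ⟨α₀, hα₀B, hα₀f⟩ := hne
      have hα₀κ : α₀ < κ.ord := hA.1 (hBA hα₀B)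
      have hsub : {α ∈ supK κ '' B' | f α = β} ⊆ (⋃₀ (sf β)) ∪ Iic α₀ := by
        rintro α' ⟨hα'B, hα'f⟩
        rcases le_or_gt α' α₀ with hle | hgt
        · exact Or.inr hle
        · left
          obtain ⟨b', hb', rfl⟩ := hα'B
          obtain ⟨a₀, ha₀, ha₀eq⟩ := hα₀B
          have hα₀b' : α₀ ∈ b' := by
            have := hcoh a₀ ha₀ b' hb' (by rw [ha₀eq]; exact hgt)
            rwa [ha₀eq] at this
          have hwsub : ⋃₀ (sf (f α₀)) ⊆ b' := by
            have := (hBAA hb').2.2.2.2 α₀ hα₀b' hgt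
            exact this
          rw [hα₀f] at hwsub
          have hα'F : supK κ b' ∈ {α ∈ A | f α = β} := ⟨hBA ⟨b', hb', rfl⟩, hα'f⟩
          obtain ⟨_, ⟨t, hts, rfl⟩, hα'cm⟩ := hsfcov β hα'F
          have htT : t ∈ T := hsfT β hts
          have htb : t ⊆ b' := (subset_sUnion_of_mem hts).trans hwsub
          by_cases hα't : supK κ b' ∈ t
          · exact ⟨t, hts, hα't⟩
          · exact absurd hα'cm ((hBAA hb').2.2.2.1 t htT htb hα't)
      refine lt_of_le_of_lt (Cardinal.mk_le_mk_of_subset hsub) ?_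
      refine lt_of_le_of_lt (Cardinal.mk_union_le _ _) ?_
      apply Cardinal.add_lt_of_lt (aleph0_lt_liftK huc).le
      · exact (smallSet_sUnion hreg huc ((hsfT β).trans hTsub) (hsfcard β)).2
      · rw [← Order.Iio_succ, Ordinal.mk_Iio_ordinal]
        exact Cardinal.lift_lt.mpr (Cardinal.lt_ord.mp
          ((Cardinal.isSuccLimit_ord hreg.aleph0_le).succ_lt hα₀κ))
    · rw [not_nonempty_iff_eq_empty] at hne
      rw [hne, Cardinal.mk_emptyCollection]
      exact zero_le.trans_lt (aleph0_lt_liftK huc)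
  · -- Weak Q-point
    intro A hA g hg
    set w : Ordinal.{0} → Set Ordinal.{0} := fun γ =>
      if h : γ < κ.ord then ({Order.succ (g γ)} : Set Ordinal.{0}) else ∅ with hw_def
    have hw : ∀ γ, w γ ∈ smallSet κ lam := by
      intro γ
      rw [hw_def]
      dsimp only
      split
      · next h =>
        refine ⟨singleton_subset_iff.mpr ?_, ?_⟩
        · exact lt_trans ((Cardinal.isSuccLimit_ord hreg.aleph0_le).succ_lt (hg γ h))
            (Cardinal.ord_lt_ord.mpr hlt)
        · rw [Cardinal.mk_singleton]
          exact lt_of_lt_of_le Cardinal.one_lt_aleph0 (aleph0_lt_liftK huc).le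
      · refine ⟨empty_subset _, ?_⟩
        rw [Cardinal.mk_emptyCollection]
        exact zero_le.trans_lt (aleph0_lt_liftK huc)
    obtain ⟨B', hBplus, hBA, hBAA, hcoh⟩ :=
      core hreg huc hlt hyp J hTsub hTK hcm hcov hA hw
    refine ⟨supK κ '' B', hBplus, hBA, ?_⟩
    rintro α hα β hβ hαβ
    obtain ⟨a, ha, rfl⟩ := hα
    obtain ⟨b, hb, rfl⟩ := hβ
    have hmem : supK κ a ∈ b := hcoh a ha b hb hαβ
    have hκα : supK κ a < κ.ord := hA.1 (hBA ⟨a, ha, rfl⟩)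
    have hwsub : w (supK κ a) ⊆ b := (hBAA hb).2.2.2.2 _ hmem hαβ
    rw [hw_def] at hwsub
    dsimp only at hwsub
    rw [dif_pos hκα] at hwsub
    have hsucc_mem : Order.succ (g (supK κ a)) ∈ b := hwsub (mem_singleton _)
    have hsuccκ : Order.succ (g (supK κ a)) < κ.ord :=
      (Cardinal.isSuccLimit_ord hreg.aleph0_le).succ_lt (hg _ hκα)
    exact lt_of_lt_of_le (Order.lt_succ _) (le_supK hsucc_mem hsuccκ)

end PaperFormal
end
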